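/- Fix λ ∈ (0, λ₀). There exists a constant K₁(λ) ≥ 1, depending only on d, M₀, M₁, λ, with the following property. Let ω ∈ Ω, r ∈ ℕ, and suppose Σ_{m=−k+1}^{0} ξ_m(ω) > k(M₁ + λ + log(2d+1)) for all k ≥ r. Then for every c ≥ 1, every φ ∈ F(c), and every integer n > (log c)/λ + r + 1: sup_{|y| > r} (T^{−n,0}(ω)φ)(y) ≤ 2K₁(λ) · e^{−λ(r+1)} · (T^{−n,0}(ω)φ)(0). -/

import Mathlib

open MeasureTheory Filter

namespace BKpaper

abbrev X (d : ℕ) := Fin d → ℤ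

/-- the max-norm |x| = max_i |x_i|, as a natural number -/
def nm {d : ℕ} (x : X d) : ℕ := Finset.univ.sup fun i => (x i).natAbs

/-- spin value of a boolean: `true ↦ 1`, `false ↦ -1` -/
def sgn (b : Bool) : ℝ := if b then 1 else -1

/-- ξ_m(ω) = M₀ if ω_m = 1, ξ_m(ω) = −M₁ if ω_m = −1 -/
def xi (M₀ M₁ : ℝ) (ω : ℤ → Bool) (m : ℤ) : ℝ := if ω m then M₀ else -M₁

/-- one admissible step of the lazy random walk -/
def stepOK {d : ℕ} (x y : X d) : Prop := (∑ i, (y i - x i).natAbs) ≤ 1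

/-- admissible path on the (discrete) interval [n₁, n₂] -/
def Adm {d : ℕ} (n₁ n₂ : ℤ) (γ : ℤ → X d) : Prop :=
  ∀ n : ℤ, n₁ ≤ n → n < n₂ → stepOK (γ n) (γ (n + 1))

/-- a path frozen outside [n₁,n₂]; used to represent a path on [n₁,n₂] by a
function on all of ℤ -/
def Frozen {d : ℕ} (n₁ n₂ : ℤ) (γ : ℤ → X d) : Prop :=
  (∀ n : ℤ, n ≤ n₁ → γ n = γ n₁) ∧ (∀ n : ℤ, n₂ ≤ n → γ n = γ n₂)

/-- Φ_{n₁,n₂}(γ,ω) = Σ_{n=n₁+1}^{n₂} V(γ(n)) ω_n -/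
noncomputable def Phi {d : ℕ} (V : X d → ℝ) (ω : ℤ → Bool) (n₁ n₂ : ℤ) (γ : ℤ → X d) : ℝ :=
  ∑ n ∈ Finset.Icc (n₁ + 1) n₂, V (γ n) * sgn (ω n)

/-- the Feynman–Kac operator T^{n₁,n₂}(ω) -/
noncomputable def T {d : ℕ} (V : X d → ℝ) (ω : ℤ → Bool) (n₁ n₂ : ℤ)
    (u : X d → ℝ) (x : X d) : ℝ :=
  ((2 * (d : ℝ) + 1) ^ (n₂ - n₁))⁻¹ *
    ∑' γ : {γ : ℤ → X d // Adm n₁ n₂ γ ∧ Frozen n₁ n₂ γ ∧ γ n₂ = x},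
      Real.exp (Phi V ω n₁ n₂ γ.1) * u (γ.1 n₁)

/-- the partition function Z_{n₁,n₂}(x₁,x₂) -/
noncomputable def Z {d : ℕ} (V : X d → ℝ) (ω : ℤ → Bool) (n₁ n₂ : ℤ) (x₁ x₂ : X d) : ℝ :=
  ∑' γ : {γ : ℤ → X d // Adm n₁ n₂ γ ∧ Frozen n₁ n₂ γ ∧ γ n₁ = x₁ ∧ γ n₂ = x₂},
    Real.exp (Phi V ω n₁ n₂ γ.1)

/-- the class F(c): nonnegative bounded functions with sup φ ≤ c·φ(0) -/
def Fset (d : ℕ) (c : ℝ) : Set (X d → ℝ) :=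
  {φ | (∀ x, 0 ≤ φ x) ∧ ∀ x, φ x ≤ c * φ 0}

/-- P is the i.i.d. Bernoulli(1/2) product measure on {−1,1}^ℤ ≃ ℤ → Bool -/
def IsBernoulli (P : Measure (ℤ → Bool)) : Prop :=
  IsProbabilityMeasure P ∧ ∀ (s : Finset ℤ) (f : ℤ → Bool),
    P {ω | ∀ i ∈ s, ω i = f i} = (1 / 2 : ENNReal) ^ s.card

/-- the shift θ^k -/
def shift (k : ℤ) (ω : ℤ → Bool) : ℤ → Bool := fun n => ω (k + n)

/-- first standard basis vector e₁ of ℤ^d -/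
def e1 (d : ℕ) : X d := fun i => if (i : ℕ) = 0 then 1 else 0

/-- the optimal path γ*: γ*_n = 0 if ω_n = 1, γ*_n = e₁ if ω_n = −1 -/
def gstar (d : ℕ) (ω : ℤ → Bool) : ℤ → X d := fun n => if ω n then 0 else e1 d

/-- the pair (m₁,m₂) is (λ,r)-good for ω -/
def Good (d : ℕ) (M₀ M₁ lam : ℝ) (r : ℕ) (m₁ m₂ : ℤ) (ω : ℤ → Bool) : Prop :=
  m₁ < m₂ ∧
  (∀ j : ℤ, m₁ + 1 ≤ j → j ≤ m₁ + r → ω j = true) ∧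
  (∀ k : ℕ, 1 ≤ k →
    (k : ℝ) * (M₁ + lam + Real.log (2 * (d : ℝ) + 1)) <
      ∑ j ∈ Finset.Icc (m₁ + r + 1) (m₁ + r + k), xi M₀ M₁ ω j) ∧
  (∀ j : ℤ, m₂ - r + 1 ≤ j → j ≤ m₂ → ω j = true) ∧
  (∀ k : ℕ, 1 ≤ k →
    (k : ℝ) * (M₁ + lam + Real.log (2 * (d : ℝ) + 1)) <
      ∑ j ∈ Finset.Icc (m₂ - r - k + 1) (m₂ - r), xi M₀ M₁ ω j)

/-- the ball B_r ⊆ ℤ^d as a finite set -/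
noncomputable def ball (d r : ℕ) : Finset (X d) := Fintype.piFinset fun _ => Finset.Icc (-(r : ℤ)) (r : ℤ)

lemma ball_nonempty (d r : ℕ) : (ball d r).Nonempty :=
  ⟨fun _ => 0, by simp [ball, Fintype.mem_piFinset]⟩

/-- the Hilbert projective (pseudo)metric ρ_r on functions restricted to B_r -/
noncomputable def rho (d r : ℕ) (φ ψ : X d → ℝ) : ℝ :=
  Real.log ((ball d r).sup' (ball_nonempty d r) (fun x => φ x / ψ x) *
            (ball d r).sup' (ball_nonempty d r) (fun x => ψ x / φ x))

/-- diam_r of a set of functions w.r.t. ρ_r -/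
noncomputable def diamr (d r : ℕ) (A : Set (X d → ℝ)) : ℝ :=
  sSup {y | ∃ φ ∈ A, ∃ ψ ∈ A, y = rho d r φ ψ}

/-- the set G(λ,r) (with K₁ explicit): φ ∈ F(2K₁) with sup_{|x|>r} φ ≤ sup_{|x|≤r} φ -/
def Gset (d : ℕ) (K₁ : ℝ) (r : ℕ) : Set (X d → ℝ) :=
  {φ | φ ∈ Fset d (2 * K₁) ∧ ∀ x, r < nm x → ∃ z, nm z ≤ r ∧ φ x ≤ φ z}

/-- the set H(λ,r) (with K₁, K₂ explicit) -/
def Hset (d : ℕ) (K₁ K₂ : ℝ) (r : ℕ) : Set (X d → ℝ) :=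
  {φ | φ ∈ Gset d K₁ r ∧ (⨆ x, φ x) = 1 ∧ ∀ y, nm y ≤ r → 1 / K₂ ≤ φ y}

/-- finite-volume Gibbs measure on [n₁,n₂] for ω (paths represented as
functions ℤ → ℤ^d frozen outside [n₁,n₂]) -/
def FVGibbs (d : ℕ) (V : X d → ℝ) (ω : ℤ → Bool) (n₁ n₂ : ℤ)
    (μ : Measure (ℤ → X d)) : Prop :=
  IsProbabilityMeasure μ ∧
  μ {γ | Adm n₁ n₂ γ ∧ Frozen n₁ n₂ γ} = 1 ∧
  ∀ γ : ℤ → X d, Adm n₁ n₂ γ →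
    μ {α | α n₁ = γ n₁ ∧ α n₂ = γ n₂} ≠ 0 →
    μ {α | ∀ n : ℤ, n₁ ≤ n → n ≤ n₂ → α n = γ n} =
      ENNReal.ofReal (Real.exp (Phi V ω n₁ n₂ γ) / Z V ω n₁ n₂ (γ n₁) (γ n₂)) *
        μ {α | α n₁ = γ n₁ ∧ α n₂ = γ n₂}

/-- (infinite-volume) Gibbs measure for ω -/
def GibbsMeasure (d : ℕ) (V : X d → ℝ) (ω : ℤ → Bool) (μ : Measure (ℤ → X d)) : Prop :=
  IsProbabilityMeasure μ ∧
  μ {α | ∀ n : ℤ, stepOK (α n) (α (n + 1))} = 1 ∧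
  ∀ n₁ n₂ : ℤ, n₁ < n₂ → ∀ γ : ℤ → X d, Adm n₁ n₂ γ →
    μ {α | α n₁ = γ n₁ ∧ α n₂ = γ n₂} ≠ 0 →
    μ {α | ∀ n : ℤ, n₁ ≤ n → n ≤ n₂ → α n = γ n} =
      ENNReal.ofReal (Real.exp (Phi V ω n₁ n₂ γ) / Z V ω n₁ n₂ (γ n₁) (γ n₂)) *
        μ {α | α n₁ = γ n₁ ∧ α n₂ = γ n₂}

/-- the weak localization condition for a measure on two-sided paths -/
def WeakLoc (d : ℕ) (μ : Measure (ℤ → X d)) : Prop :=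
  ∀ ε : ℝ, 0 < ε → ∃ r : ℕ,
    Filter.liminf (fun n : ℤ => μ {α | r < nm (α n)}) Filter.atTop < ENNReal.ofReal ε ∧
    Filter.liminf (fun n : ℤ => μ {α | r < nm (α n)}) Filter.atBot < ENNReal.ofReal ε

/-- normalized positive eigenfunction of the cocycle T -/
def IsEigen (d : ℕ) (V : X d → ℝ) (P : Measure (ℤ → Bool))
    (u : (ℤ → Bool) → X d → ℝ) : Prop :=
  (∀ x : X d, Measurable fun ω => u ω x) ∧
  ∀ᵐ ω ∂P, (∀ x, 0 < u ω x) ∧ BddAbove (Set.range (u ω)) ∧ (⨆ x, u ω x) = 1 ∧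
    ∃ κ : ℝ, 0 < κ ∧ ∀ x, T V ω 0 1 (u ω) x = κ * u (shift 1 ω) x



section Aux
variable {d : ℕ}

/-- allowed increments: steps of ℓ¹-length at most 1 -/
noncomputable def DF (d : ℕ) : Finset (X d) :=
  (Fintype.piFinset fun _ : Fin d => Finset.Icc (-1 : ℤ) 1).filter
    fun δ => (∑ i, (δ i).natAbs) ≤ 1

lemma mem_DF {δ : X d} : δ ∈ DF d ↔ (∑ i, (δ i).natAbs) ≤ 1 := by
  classical
  constructor
  · intro h; exact (Finset.mem_filter.1 h).2
  · intro h
    refine Finset.mem_filter.2 ⟨?_, h⟩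
    refine Fintype.mem_piFinset.2 fun i => ?_
    have hle : (δ i).natAbs ≤ 1 :=
      le_trans (Finset.single_le_sum (f := fun i => (δ i).natAbs)
        (fun _ _ => Nat.zero_le _) (Finset.mem_univ i)) h
    simp only [Finset.mem_Icc]; omega

lemma card_DF : (DF d).card ≤ 2 * d + 1 := by
  classical
  have hsub : DF d ⊆ insert (0 : X d)
      ((Finset.univ : Finset (Fin d × Bool)).image
        fun p : Fin d × Bool => (fun j => if j = p.1 then (if p.2 then 1 else -1) else 0 : X d)) := by
    intro δ hδ
    have h1 : (∑ i, (δ i).natAbs) ≤ 1 := mem_DF.1 hδ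
    rcases Nat.le_one_iff_eq_zero_or_eq_one.1 h1 with h0 | h1
    · refine Finset.mem_insert.2 (Or.inl ?_)
      funext i
      have := (Finset.sum_eq_zero_iff).1 h0 i (Finset.mem_univ i)
      simpa using (by omega : δ i = 0)
    · have hex : ∃ i, δ i ≠ 0 := by
        by_contra hcon
        push_neg at hcon
        rw [Finset.sum_eq_zero (fun i _ => by rw [hcon i]; rfl)] at h1
        exact absurd h1 (by norm_num)
      obtain ⟨i, hi⟩ := hex
      have hsplit : (δ i).natAbs + ∑ j ∈ Finset.univ.erase i, (δ j).natAbs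
          = ∑ j, (δ j).natAbs :=
        Finset.add_sum_erase Finset.univ (fun i => (δ i).natAbs) (Finset.mem_univ i)
      have hi1 : (δ i).natAbs = 1 := by omega
      have hrest : ∑ j ∈ Finset.univ.erase i, (δ j).natAbs = 0 := by omega
      have hz : ∀ j, j ≠ i → δ j = 0 := by
        intro j hj
        have := (Finset.sum_eq_zero_iff).1 hrest j (Finset.mem_erase.2 ⟨hj, Finset.mem_univ j⟩)
        omega
      refine Finset.mem_insert.2 (Or.inr ?_)
      by_cases hδi : δ i = 1
      · refine Finset.mem_image.2 ⟨(i, true), Finset.mem_univ _, ?_⟩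
        funext j
        by_cases hji : j = i
        · subst hji; simp [hδi]
        · simp [hji, hz j hji]
      · have hδi' : δ i = -1 := by omega
        refine Finset.mem_image.2 ⟨(i, false), Finset.mem_univ _, ?_⟩
        funext j
        by_cases hji : j = i
        · subst hji; simp [hδi']
        · simp [hji, hz j hji]
  calc (DF d).card ≤ _ := Finset.card_le_card hsub
    _ ≤ ((Finset.univ : Finset (Fin d × Bool)).image
          (fun p : Fin d × Bool => (fun j => if j = p.1 then (if p.2 then 1 else -1) else 0 : X d))).card + 1 :=
        Finset.card_insert_le _ _
    _ ≤ (Finset.univ : Finset (Fin d × Bool)).card + 1 := by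
        exact Nat.add_le_add_right (Finset.card_image_le) 1
    _ = 2 * d + 1 := by simp [Finset.card_univ]; ring

/-- increment sequence of a path starting at time `a` -/
def inc (a : ℤ) (γ : ℤ → X d) (j : ℕ) : X d := γ (a + j + 1) - γ (a + j)

lemma tele (a : ℤ) (γ : ℤ → X d) (j : ℕ) :
    γ (a + j) = γ a + ∑ i ∈ Finset.range j, inc a γ i := by
  induction j with
  | zero => simp
  | succ j ih =>
      have hc : a + ((j + 1 : ℕ) : ℤ) = (a + (j : ℕ)) + 1 := by push_cast; ring
      rw [Finset.sum_range_succ, ← add_assoc, ← ih, hc, inc]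
      simp

lemma eq_at_of_inc (a : ℤ) (γ γ' : ℤ → X d) (j : ℕ) (ha : γ a = γ' a)
    (h : ∀ i < j, inc a γ i = inc a γ' i) : γ (a + j) = γ' (a + j) := by
  rw [tele a γ j, tele a γ' j, ha]
  congr 1
  exact Finset.sum_congr rfl fun i hi => h i (Finset.mem_range.1 hi)

lemma path_ext_upper {bk b : ℤ} (hkb : bk ≤ b) {γ γ' : ℤ → X d}
    (hlow : ∀ m, m ≤ bk → γ m = γ' m)
    (hfr : ∀ m, b ≤ m → γ m = γ b) (hfr' : ∀ m, b ≤ m → γ' m = γ' b)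
    (hb : γ b = γ' b)
    (h : ∀ j, j < (b - bk).toNat → inc bk γ j = inc bk γ' j) : γ = γ' := by
  funext m
  rcases le_or_gt m bk with hm | hm
  · exact hlow m hm
  rcases le_or_gt b m with hm2 | hm2
  · rw [hfr m hm2, hfr' m hm2, hb]
  · have hm' : m = bk + (((m - bk).toNat : ℕ) : ℤ) := by omega
    rw [hm']
    exact eq_at_of_inc bk γ γ' _ (hlow bk le_rfl) (fun i hi => h i (by omega))

lemma inc_mem_DF {a b c : ℤ} {γ : ℤ → X d} (hγ : Adm a b γ) {j : ℕ}
    (h1 : a ≤ c) (hj : c + j < b) : inc c γ j ∈ DF d := by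
  refine mem_DF.2 ?_
  have := hγ (c + j) (by omega) hj
  simpa [stepOK, inc] using this

lemma path_finite (a b : ℤ) (x : X d) :
    Finite {γ : ℤ → X d // Adm a b γ ∧ Frozen a b γ ∧ γ b = x} := by
  classical
  rcases le_or_gt a b with hab | hba
  · refine Finite.of_injective
      (fun γ : {γ : ℤ → X d // Adm a b γ ∧ Frozen a b γ ∧ γ b = x} =>
        (fun j : Fin (b - a).toNat => (⟨inc a γ.1 j, inc_mem_DF γ.2.1 le_rfl (by
          have := j.2; omega)⟩ : {δ : X d // δ ∈ DF d}))) ?_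
    intro γ γ' hEq
    apply Subtype.ext
    have hinc : ∀ j, j < (b - a).toNat → inc a γ.1 j = inc a γ'.1 j := by
      intro j hj
      have := congrFun hEq ⟨j, hj⟩
      simpa [Subtype.ext_iff] using this
    have hb' : a + (((b - a).toNat : ℕ) : ℤ) = b := by omega
    have hA : γ.1 a = γ'.1 a := by
      have t1 := tele a γ.1 (b - a).toNat
      have t2 := tele a γ'.1 (b - a).toNat
      rw [hb'] at t1 t2
      have hbb : γ.1 b = γ'.1 b := by rw [γ.2.2.2, γ'.2.2.2]
      have hs : ∑ i ∈ Finset.range (b - a).toNat, inc a γ.1 i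
          = ∑ i ∈ Finset.range (b - a).toNat, inc a γ'.1 i :=
        Finset.sum_congr rfl fun i hi => hinc i (Finset.mem_range.1 hi)
      rw [t1, t2, hs] at hbb
      exact add_right_cancel hbb
    refine path_ext_upper hab (fun m hm => ?_) (fun m hm => γ.2.2.1.2 m hm)
      (fun m hm => γ'.2.2.1.2 m hm) (by rw [γ.2.2.2, γ'.2.2.2]) hinc
    rw [γ.2.2.1.1 m hm, γ'.2.2.1.1 m hm, hA]
  · have hconst : ∀ (γ : ℤ → X d), Frozen a b γ → γ b = x → γ = fun _ => x := by
      intro γ hfr hxx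
      funext m
      rcases le_or_gt m a with hm | hm
      · rw [hfr.1 m hm, hfr.2 a hba.le, hxx]
      · rw [hfr.2 m (by omega), hxx]
    have : Subsingleton {γ : ℤ → X d // Adm a b γ ∧ Frozen a b γ ∧ γ b = x} := by
      constructor
      rintro ⟨γ, h1, h2, h3⟩ ⟨γ', h1', h2', h3'⟩
      simp only [Subtype.mk.injEq]
      rw [hconst γ h2 h3, hconst γ' h2' h3']
    exact Finite.of_subsingleton

noncomputable instance pathFintype (a b : ℤ) (x : X d) :
    Fintype {γ : ℤ → X d // Adm a b γ ∧ Frozen a b γ ∧ γ b = x} :=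
  @Fintype.ofFinite _ (path_finite a b x)

lemma T_eq (V : X d → ℝ) (ω : ℤ → Bool) (a b : ℤ) (u : X d → ℝ) (x : X d) :
    T V ω a b u x = ((2 * (d : ℝ) + 1) ^ (b - a))⁻¹ *
      ∑ γ : {γ : ℤ → X d // Adm a b γ ∧ Frozen a b γ ∧ γ b = x},
        Real.exp (Phi V ω a b γ.1) * u (γ.1 a) := by
  unfold T
  congr 1
  exact tsum_fintype _

lemma dist_bound {a b : ℤ} {γ : ℤ → X d} (hγ : Adm a b γ) {m : ℤ} (h1 : a ≤ m)
    (i : Fin d) : ∀ j : ℕ, m + j ≤ b → (γ (m + j) i - γ m i).natAbs ≤ j := by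
  intro j
  induction j with
  | zero => intro _; simp
  | succ j ih =>
      intro hjb
      have hjb' : m + (j : ℤ) + 1 ≤ b := by push_cast at hjb; omega
      have ihj := ih (by omega)
      have hstep : (∑ x, (γ (m + (j : ℤ) + 1) x - γ (m + (j : ℤ)) x).natAbs) ≤ 1 :=
        hγ (m + (j : ℤ)) (by omega) (by omega)
      have hone : (γ (m + (j : ℤ) + 1) i - γ (m + (j : ℤ)) i).natAbs ≤ 1 :=
        le_trans (Finset.single_le_sum (f := fun x => (γ (m + (j : ℤ) + 1) x - γ (m + (j : ℤ)) x).natAbs)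
          (fun _ _ => Nat.zero_le _) (Finset.mem_univ i)) hstep
      have hcast : m + ((j + 1 : ℕ) : ℤ) = m + (j : ℤ) + 1 := by push_cast; ring
      rw [hcast]
      omega

lemma Icc_succ_eq_Ioc (a b : ℤ) : Finset.Icc (a + 1) b = Finset.Ioc a b := by
  ext m; simp only [Finset.mem_Icc, Finset.mem_Ioc]; omega

lemma Phi_split (V : X d → ℝ) (ω : ℤ → Bool) {a c b : ℤ} (hac : a ≤ c) (hcb : c ≤ b)
    (γ : ℤ → X d) : Phi V ω a b γ = Phi V ω a c γ + Phi V ω c b γ := by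
  simp only [Phi, Icc_succ_eq_Ioc]
  rw [← Finset.Ioc_union_Ioc_eq_Ioc hac hcb, Finset.sum_union]
  exact Finset.disjoint_left.2 (by intro m h1 h2; simp only [Finset.mem_Ioc] at h1 h2; omega)

end Aux


section Aux2
variable {d : ℕ}

lemma sum_le_of_map {A B : Type*} [Fintype A] [Fintype B] [DecidableEq B]
    (f : A → ℝ) (g : B → ℝ) (m : A → B) (s : Finset A) (C N : ℝ)
    (hgnn : ∀ b, 0 ≤ g b) (hC : 0 ≤ C)
    (hf : ∀ a ∈ s, f a ≤ C * g (m a))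
    (hN : ∀ b : B, (((s.filter fun a => m a = b).card : ℝ)) ≤ N) :
    ∑ a ∈ s, f a ≤ N * C * ∑ b, g b := by
  classical
  calc ∑ a ∈ s, f a
      = ∑ b : B, ∑ a ∈ s.filter (fun a => m a = b), f a :=
        (Finset.sum_fiberwise_of_maps_to (fun a _ => Finset.mem_univ (m a)) f).symm
    _ ≤ ∑ b : B, N * (C * g b) := by
        refine Finset.sum_le_sum fun b _ => ?_
        calc ∑ a ∈ s.filter (fun a => m a = b), f a
            ≤ ∑ a ∈ s.filter (fun a => m a = b), C * g b := by
              refine Finset.sum_le_sum fun a ha => ?_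
              have h1 := Finset.mem_filter.1 ha
              calc f a ≤ C * g (m a) := hf a h1.1
                _ = C * g b := by rw [h1.2]
          _ = ((s.filter fun a => m a = b).card : ℝ) * (C * g b) := by
              rw [Finset.sum_const, nsmul_eq_mul]
          _ ≤ N * (C * g b) :=
              mul_le_mul_of_nonneg_right (hN b) (mul_nonneg hC (hgnn b))
    _ = N * C * ∑ b, g b := by
        rw [Finset.mul_sum]
        exact Finset.sum_congr rfl fun b _ => by ring

lemma e1_ne (hd : 1 ≤ d) : e1 d ≠ (0 : X d) := by
  intro h
  have := congrFun h ⟨0, hd⟩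
  simp [e1] at this

lemma e1_sum (hd : 1 ≤ d) : (∑ i, ((e1 d) i).natAbs) = 1 := by
  classical
  have key : ∀ i : Fin d, ((e1 d) i).natAbs = if i = ⟨0, hd⟩ then 1 else 0 := by
    intro i
    simp only [e1]
    by_cases h : (i : ℕ) = 0
    · have hi : i = ⟨0, hd⟩ := Fin.ext h
      simp [h, hi]
    · have hi : ¬ i = ⟨0, hd⟩ := by intro hh; rw [hh] at h; exact h rfl
      simp [h, hi]
  rw [Finset.sum_congr rfl (fun i _ => key i)]
  simp

lemma stepOK_01 (hd : 1 ≤ d) {u v : X d} (hu : u = 0 ∨ u = e1 d) (hv : v = 0 ∨ v = e1 d) :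
    stepOK u v := by
  have h1 := e1_sum hd
  rcases hu with hu | hu <;> rcases hv with hv | hv <;> subst hu <;> subst hv <;>
    unfold stepOK
  · simp
  · simpa using h1.le
  · simpa [Int.natAbs_neg] using h1.le
  · simp

lemma gstar_cases (ω : ℤ → Bool) (m : ℤ) : gstar d ω m = 0 ∨ gstar d ω m = e1 d := by
  unfold gstar
  split
  · left; rfl
  · right; rfl

/-! ### cut paths -/

def cutPath (b : ℤ) (γ : ℤ → X d) : ℤ → X d := fun m => if m ≤ b then γ m else γ b

lemma cut_apply_le {b m : ℤ} (γ : ℤ → X d) (h : m ≤ b) : cutPath b γ m = γ m :=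
  if_pos h

lemma cut_adm {a b b2 : ℤ} {γ : ℤ → X d} (hγ : Adm a b2 γ) (hb : b ≤ b2) :
    Adm a b (cutPath b γ) := by
  intro m hm1 hm2
  have h1 : m ≤ b := by omega
  have h2 : m + 1 ≤ b := by omega
  simpa [cutPath, h1, h2] using hγ m hm1 (by omega)

lemma cut_frozen {a b b2 : ℤ} {γ : ℤ → X d} (hfr : Frozen a b2 γ) (hab : a ≤ b) :
    Frozen a b (cutPath b γ) := by
  constructor
  · intro m hm
    simp only [cutPath, if_pos (le_trans hm hab), if_pos hab]
    exact hfr.1 m hm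
  · intro m hm
    simp only [cutPath, if_pos le_rfl]
    rcases eq_or_lt_of_le hm with h | h
    · rw [if_pos h.symm.le, ← h]
    · rw [if_neg (by omega)]

lemma Phi_cut (V : X d → ℝ) (ω : ℤ → Bool) (a b : ℤ) (γ : ℤ → X d) :
    Phi V ω a b (cutPath b γ) = Phi V ω a b γ := by
  unfold Phi
  refine Finset.sum_congr rfl fun m hm => ?_
  rw [Finset.mem_Icc] at hm
  rw [cut_apply_le γ hm.2]

/-! ### extended paths -/

def extPath (ω : ℤ → Bool) (b : ℤ) (γ : ℤ → X d) : ℤ → X d :=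
  fun m => if m ≤ b then γ m else if m < 0 then gstar d ω m else 0

lemma ext_apply_le {b m : ℤ} (ω : ℤ → Bool) (γ : ℤ → X d) (h : m ≤ b) :
    extPath ω b γ m = γ m := if_pos h

lemma ext_cases (hd : 1 ≤ d) (ω : ℤ → Bool) {b : ℤ} {γ : ℤ → X d} (hb0 : γ b = 0)
    {m : ℤ} (hm : b ≤ m) : extPath ω b γ m = 0 ∨ extPath ω b γ m = e1 d := by
  unfold extPath
  rcases eq_or_lt_of_le hm with h | h
  · rw [if_pos h.symm.le, ← h]; left; exact hb0
  · rw [if_neg (by omega)]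
    by_cases h2 : m < 0
    · rw [if_pos h2]; exact gstar_cases ω m
    · rw [if_neg h2]; left; rfl

lemma ext_adm (hd : 1 ≤ d) (ω : ℤ → Bool) {a b : ℤ} {γ : ℤ → X d}
    (hγ : Adm a b γ) (hb0 : γ b = 0) : Adm a 0 (extPath ω b γ) := by
  intro m hm1 hm2
  by_cases h2 : m + 1 ≤ b
  · have h1 : m ≤ b := by omega
    simpa [extPath, h1, h2] using hγ m hm1 (by omega)
  · by_cases h1 : m ≤ b
    · have hmb : m = b := by omega
      refine stepOK_01 hd ?_ (ext_cases hd ω hb0 (by omega))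
      left
      rw [ext_apply_le ω γ h1, hmb, hb0]
    · exact stepOK_01 hd (ext_cases hd ω hb0 (by omega)) (ext_cases hd ω hb0 (by omega))

lemma ext_frozen (ω : ℤ → Bool) {a b : ℤ} {γ : ℤ → X d}
    (hfr : Frozen a b γ) (hab : a ≤ b) (hb : b ≤ -1) : Frozen a 0 (extPath ω b γ) := by
  constructor
  · intro m hm
    rw [ext_apply_le ω γ (le_trans hm hab), ext_apply_le ω γ hab]
    exact hfr.1 m hm
  · intro m hm
    simp only [extPath, if_neg (by omega : ¬ m ≤ b), if_neg (by omega : ¬ m < (0:ℤ)),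
      if_neg (by omega : ¬ (0:ℤ) ≤ b), if_neg (by omega : ¬ (0:ℤ) < (0:ℤ))]

lemma ext_zero (ω : ℤ → Bool) {b : ℤ} (γ : ℤ → X d) (hb : b ≤ -1) :
    extPath ω b γ 0 = 0 := by
  simp only [extPath, if_neg (by omega : ¬ (0:ℤ) ≤ b), if_neg (by omega : ¬ (0:ℤ) < (0:ℤ))]

lemma Phi_ext (V : X d → ℝ) (ω : ℤ → Bool) (a b : ℤ) (γ : ℤ → X d) :
    Phi V ω a b (extPath ω b γ) = Phi V ω a b γ := by
  unfold Phi
  refine Finset.sum_congr rfl fun m hm => ?_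
  rw [Finset.mem_Icc] at hm
  rw [ext_apply_le ω γ hm.2]

lemma ext_phi_tail {M₀ M₁ : ℝ} (hM : 0 ≤ M₀ - M₁) {V : X d → ℝ} (hV0 : V 0 = M₀)
    (hV1 : ∀ x : X d, x ≠ 0 → |V x| ≤ M₁) (hd : 1 ≤ d) (ω : ℤ → Bool) {b : ℤ} (hb : b ≤ -1)
    (γ : ℤ → X d) :
    (∑ m ∈ Finset.Icc (b + 1) 0, xi M₀ M₁ ω m) - (M₀ - M₁) ≤ Phi V ω b 0 (extPath ω b γ) := by
  unfold Phi
  have key : ∀ m ∈ Finset.Icc (b + 1) (0 : ℤ),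
      xi M₀ M₁ ω m - (if m = 0 then M₀ - M₁ else 0) ≤ V ((extPath ω b γ) m) * sgn (ω m) := by
    intro m hm
    rw [Finset.mem_Icc] at hm
    by_cases hm0 : m = 0
    · subst hm0
      rw [if_pos rfl, ext_zero ω γ hb, hV0]
      unfold xi sgn
      by_cases h : ω 0 <;> simp [h] <;> linarith
    · rw [if_neg hm0]
      have hmlt : m < 0 := by omega
      have he : extPath ω b γ m = gstar d ω m := by
        simp only [extPath, if_neg (by omega : ¬ m ≤ b), if_pos hmlt]
      rw [he]
      unfold gstar xi sgn
      by_cases h : ω m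
      · simp [h, hV0]
      · simp only [h, if_false, if_neg (by simp : ¬ False)]
        have habs := abs_le.1 (hV1 (e1 d) (e1_ne hd))
        simp only [Bool.false_eq_true, if_false]
        nlinarith [habs.1, habs.2]
  calc (∑ m ∈ Finset.Icc (b + 1) 0, xi M₀ M₁ ω m) - (M₀ - M₁)
      = ∑ m ∈ Finset.Icc (b + 1) (0:ℤ), (xi M₀ M₁ ω m - if m = 0 then M₀ - M₁ else 0) := by
        rw [Finset.sum_sub_distrib]
        congr 1
        rw [Finset.sum_ite_eq' (Finset.Icc (b+1) 0) (0:ℤ) (fun _ => M₀ - M₁)]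
        rw [if_pos (by rw [Finset.mem_Icc]; omega)]
    _ ≤ _ := Finset.sum_le_sum key

lemma Phi_le_of_ne_zero {M₁ : ℝ} (hM₁ : 0 ≤ M₁) {V : X d → ℝ}
    (hV1 : ∀ x : X d, x ≠ 0 → |V x| ≤ M₁) (ω : ℤ → Bool) {b c : ℤ} (γ : ℤ → X d)
    (hne : ∀ m : ℤ, b < m → m ≤ c → γ m ≠ 0) :
    Phi V ω b c γ ≤ ((c - b).toNat : ℝ) * M₁ := by
  unfold Phi
  calc ∑ m ∈ Finset.Icc (b + 1) c, V (γ m) * sgn (ω m)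
      ≤ ∑ m ∈ Finset.Icc (b + 1) c, M₁ := by
        refine Finset.sum_le_sum fun m hm => ?_
        rw [Finset.mem_Icc] at hm
        have h := abs_le.1 (hV1 (γ m) (hne m (by omega) hm.2))
        unfold sgn
        by_cases hω : ω m <;> simp [hω] <;> linarith
    _ = ((Finset.Icc (b + 1) c).card : ℝ) * M₁ := by rw [Finset.sum_const, nsmul_eq_mul]
    _ = ((c - b).toNat : ℝ) * M₁ := by
        have h : c + 1 - (b + 1) = c - b := by ring
        rw [Int.card_Icc, h]

end Aux2


section Aux3
variable {d : ℕ}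

lemma encode_injective (a b : ℤ) (hab : a ≤ b) (x : X d) :
    Function.Injective (fun γ : {γ : ℤ → X d // Adm a b γ ∧ Frozen a b γ ∧ γ b = x} =>
      (fun j : Fin (b - a).toNat =>
        (⟨inc a γ.1 j, inc_mem_DF γ.2.1 le_rfl (by have := j.2; omega)⟩
          : {δ : X d // δ ∈ DF d}))) := by
  intro γ γ' hEq
  apply Subtype.ext
  have hinc : ∀ j, j < (b - a).toNat → inc a γ.1 j = inc a γ'.1 j := by
    intro j hj
    have := congrFun hEq ⟨j, hj⟩
    simpa [Subtype.ext_iff] using this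
  have hb' : a + (((b - a).toNat : ℕ) : ℤ) = b := by omega
  have hA : γ.1 a = γ'.1 a := by
    have t1 := tele a γ.1 (b - a).toNat
    have t2 := tele a γ'.1 (b - a).toNat
    rw [hb'] at t1 t2
    have hbb : γ.1 b = γ'.1 b := by rw [γ.2.2.2, γ'.2.2.2]
    have hs : ∑ i ∈ Finset.range (b - a).toNat, inc a γ.1 i
        = ∑ i ∈ Finset.range (b - a).toNat, inc a γ'.1 i :=
      Finset.sum_congr rfl fun i hi => hinc i (Finset.mem_range.1 hi)
    rw [t1, t2, hs] at hbb
    exact add_right_cancel hbb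
  refine path_ext_upper hab (fun m hm => ?_) (fun m hm => γ.2.2.1.2 m hm)
    (fun m hm => γ'.2.2.1.2 m hm) (by rw [γ.2.2.2, γ'.2.2.2]) hinc
  rw [γ.2.2.1.1 m hm, γ'.2.2.1.1 m hm, hA]

lemma path_card_le {a b : ℤ} (hab : a ≤ b) (x : X d) :
    Fintype.card {γ : ℤ → X d // Adm a b γ ∧ Frozen a b γ ∧ γ b = x}
      ≤ (2 * d + 1) ^ (b - a).toNat := by
  classical
  calc Fintype.card {γ : ℤ → X d // Adm a b γ ∧ Frozen a b γ ∧ γ b = x}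
      ≤ Fintype.card (Fin (b - a).toNat → {δ : X d // δ ∈ DF d}) :=
        Fintype.card_le_of_injective _ (encode_injective a b hab x)
    _ = (DF d).card ^ (b - a).toNat := by
        rw [Fintype.card_fun]
        simp [Fintype.card_coe]
    _ ≤ (2 * d + 1) ^ (b - a).toNat := Nat.pow_le_pow_left card_DF _

end Aux3

set_option maxHeartbeats 2000000 in
/-- Lemma 3.2 (initialization in the past). -/
theorem statement2
    (d : ℕ) (hd : 1 ≤ d) (M₀ M₁ : ℝ) (hM₀ : 0 ≤ M₀) (hM₁ : 0 ≤ M₁)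
    (hl0 : 0 < (M₀ - 3 * M₁) / 2 - Real.log (2 * (d : ℝ) + 1))
    (lam : ℝ) (hlam : 0 < lam)
    (hlam' : lam < (M₀ - 3 * M₁) / 2 - Real.log (2 * (d : ℝ) + 1)) :
    ∃ K₁ : ℝ, 1 ≤ K₁ ∧
      ∀ (V : X d → ℝ), V 0 = M₀ → (∀ x : X d, x ≠ 0 → |V x| ≤ M₁) →
      ∀ (ω : ℤ → Bool) (r : ℕ),
        (∀ k : ℕ, r ≤ k →
          (k : ℝ) * (M₁ + lam + Real.log (2 * (d : ℝ) + 1)) <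
            ∑ m ∈ Finset.Icc (-(k : ℤ) + 1) 0, xi M₀ M₁ ω m) →
        ∀ c : ℝ, 1 ≤ c → ∀ φ ∈ Fset d c, ∀ n : ℕ,
          Real.log c / lam + r + 1 < (n : ℝ) →
          ∀ y : X d, r < nm y →
            T V ω (-(n : ℤ)) 0 φ y ≤
              2 * K₁ * Real.exp (-lam * (r + 1)) * T V ω (-(n : ℤ)) 0 φ 0 := by
  classical
  have h2d : (0:ℝ) < 2 * (d:ℝ) + 1 := by positivity
  have h2d1 : (1:ℝ) ≤ 2 * (d:ℝ) + 1 := by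
    have : (0:ℝ) ≤ (d:ℝ) := Nat.cast_nonneg d
    linarith
  set L : ℝ := Real.log (2 * (d:ℝ) + 1) with hLdef
  have hL0 : 0 ≤ L := Real.log_nonneg h2d1
  have hM01 : 0 ≤ M₀ - M₁ := by linarith
  set x : ℝ := Real.exp (-lam) with hxdef
  have hx0 : 0 < x := Real.exp_pos _
  have hx1 : x < 1 := by
    rw [hxdef, Real.exp_lt_one_iff]
    linarith
  have h1x : 0 < 1 - x := by linarith
  set Kf : ℝ := Real.exp (M₀ - M₁) * (1 / (1 - x) + 1) with hKf
  refine ⟨max 1 Kf, le_max_left _ _, ?_⟩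
  intro V hV0 hV1 ω r hxi c hc φ hφ n hn y hy
  obtain ⟨hφ0, hφc⟩ := hφ
  -- the hypothesis forces r ≥ 1
  rcases Nat.eq_zero_or_pos r with hr0 | hrpos
  · exfalso
    subst hr0
    have h00 := hxi 0 le_rfl
    have hemp : Finset.Icc (-((0:ℕ):ℤ) + 1) 0 = ∅ := by
      apply Finset.Icc_eq_empty
      norm_num
    rw [hemp] at h00
    simp at h00
  have hlogc : 0 ≤ Real.log c := Real.log_nonneg hc
  have hrn : (r : ℝ) + 1 < (n : ℝ) := by
    have hdiv : 0 ≤ Real.log c / lam := div_nonneg hlogc hlam.le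
    linarith
  have hrn2 : r + 1 < n := by exact_mod_cast hrn
  have hlogc2 : Real.log c < ((n:ℝ) - r - 1) * lam := by
    have h1 : Real.log c / lam < (n:ℝ) - r - 1 := by linarith
    exact (div_lt_iff₀ hlam).1 h1
  set a : ℤ := -(n : ℤ) with ha
  -- the weight sum at 0
  set W0 : ℝ := ∑ γ : {γ : ℤ → X d // Adm a 0 γ ∧ Frozen a 0 γ ∧ γ 0 = (0 : X d)},
      Real.exp (Phi V ω a 0 γ.1) * φ (γ.1 a) with hW0
  have hW0nn : 0 ≤ W0 := by
    rw [hW0]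
    exact Finset.sum_nonneg fun γ _ => mul_nonneg (Real.exp_pos _).le (hφ0 _)
  -- Step A : extension of heads by the optimal path
  have stepA : ∀ k : ℕ, 1 ≤ k → k ≤ n →
      (∑ h : {γ : ℤ → X d // Adm a (-(k:ℤ)) γ ∧ Frozen a (-(k:ℤ)) γ ∧ γ (-(k:ℤ)) = (0 : X d)},
        Real.exp (Phi V ω a (-(k:ℤ)) h.1) * φ (h.1 a))
      ≤ Real.exp (M₀ - M₁ - ∑ m ∈ Finset.Icc (-(k:ℤ) + 1) 0, xi M₀ M₁ ω m) * W0 := by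
    intro k hk1 hkn
    have hab : a ≤ -(k:ℤ) := by omega
    have hbm : -(k:ℤ) ≤ -1 := by omega
    have hmain := sum_le_of_map
      (f := fun h : {γ : ℤ → X d // Adm a (-(k:ℤ)) γ ∧ Frozen a (-(k:ℤ)) γ ∧ γ (-(k:ℤ)) = (0 : X d)} =>
        Real.exp (Phi V ω a (-(k:ℤ)) h.1) * φ (h.1 a))
      (g := fun γ : {γ : ℤ → X d // Adm a 0 γ ∧ Frozen a 0 γ ∧ γ 0 = (0 : X d)} =>
        Real.exp (Phi V ω a 0 γ.1) * φ (γ.1 a))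
      (m := fun h => ⟨extPath ω (-(k:ℤ)) h.1,
        ext_adm hd ω h.2.1 h.2.2.2, ext_frozen ω h.2.2.1 hab hbm, ext_zero ω h.1 hbm⟩)
      Finset.univ
      (Real.exp (M₀ - M₁ - ∑ m ∈ Finset.Icc (-(k:ℤ) + 1) 0, xi M₀ M₁ ω m)) 1
      (fun γ => mul_nonneg (Real.exp_pos _).le (hφ0 _)) (Real.exp_pos _).le
      ?_ ?_
    · rw [hW0]
      rw [one_mul] at hmain
      exact hmain
    · -- pointwise bound
      intro h _
      have htail := ext_phi_tail hM01 hV0 hV1 hd ω hbm h.1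
      have hsplit : Phi V ω a 0 (extPath ω (-(k:ℤ)) h.1)
          = Phi V ω a (-(k:ℤ)) (extPath ω (-(k:ℤ)) h.1)
            + Phi V ω (-(k:ℤ)) 0 (extPath ω (-(k:ℤ)) h.1) :=
        Phi_split V ω hab (by omega) _
      have hφeq : φ ((extPath ω (-(k:ℤ)) h.1) a) = φ (h.1 a) := by
        rw [ext_apply_le ω h.1 hab]
      simp only
      rw [hφeq]
      calc Real.exp (Phi V ω a (-(k:ℤ)) h.1) * φ (h.1 a)
          ≤ (Real.exp (M₀ - M₁ - ∑ m ∈ Finset.Icc (-(k:ℤ) + 1) 0, xi M₀ M₁ ω m)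
            * Real.exp (Phi V ω a 0 (extPath ω (-(k:ℤ)) h.1))) * φ (h.1 a) := by
            apply mul_le_mul_of_nonneg_right _ (hφ0 _)
            rw [← Real.exp_add]
            apply Real.exp_le_exp.2
            rw [hsplit, Phi_ext]
            linarith
        _ = Real.exp (M₀ - M₁ - ∑ m ∈ Finset.Icc (-(k:ℤ) + 1) 0, xi M₀ M₁ ω m)
            * (Real.exp (Phi V ω a 0 (extPath ω (-(k:ℤ)) h.1)) * φ (h.1 a)) := by ring
    · -- injectivity : fibers have at most one element
      intro γ0
      have hcard : ((Finset.univ.filter (fun h :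
          {γ : ℤ → X d // Adm a (-(k:ℤ)) γ ∧ Frozen a (-(k:ℤ)) γ ∧ γ (-(k:ℤ)) = (0 : X d)} =>
          (⟨extPath ω (-(k:ℤ)) h.1, ext_adm hd ω h.2.1 h.2.2.2, ext_frozen ω h.2.2.1 hab hbm,
            ext_zero ω h.1 hbm⟩ : {γ : ℤ → X d // Adm a 0 γ ∧ Frozen a 0 γ ∧ γ 0 = (0:X d)})
            = γ0)).card : ℝ) ≤ 1 := by
        have h1 : (Finset.univ.filter (fun h :
            {γ : ℤ → X d // Adm a (-(k:ℤ)) γ ∧ Frozen a (-(k:ℤ)) γ ∧ γ (-(k:ℤ)) = (0 : X d)} =>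
            (⟨extPath ω (-(k:ℤ)) h.1, ext_adm hd ω h.2.1 h.2.2.2, ext_frozen ω h.2.2.1 hab hbm,
              ext_zero ω h.1 hbm⟩ : {γ : ℤ → X d // Adm a 0 γ ∧ Frozen a 0 γ ∧ γ 0 = (0:X d)})
              = γ0)).card ≤ 1 := by
          refine Finset.card_le_one.2 ?_
          intro h1 hh1 h2 hh2
          have hEq : extPath ω (-(k:ℤ)) h1.1 = extPath ω (-(k:ℤ)) h2.1 := by
            have e1 := (Finset.mem_filter.1 hh1).2
            have e2 := (Finset.mem_filter.1 hh2).2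
            have e3 := e1.trans e2.symm
            exact congrArg Subtype.val e3
          apply Subtype.ext
          funext mm
          rcases le_or_gt mm (-(k:ℤ)) with hmm | hmm
          · have := congrFun hEq mm
            rwa [ext_apply_le ω h1.1 hmm, ext_apply_le ω h2.1 hmm] at this
          · rw [h1.2.2.1.2 mm (by omega), h2.2.2.1.2 mm (by omega), h1.2.2.2, h2.2.2.2]
        exact_mod_cast h1
      exact hcard
  -- Step L : lower bound for W0 via the optimal path
  have stepL : φ 0 ≤ Real.exp (M₀ - M₁ - ∑ m ∈ Finset.Icc (-(n:ℤ) + 1) 0, xi M₀ M₁ ω m) * W0 := by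
    refine le_trans ?_ (stepA n (by omega) le_rfl)
    have hadm : Adm a (-(n:ℤ)) (fun _ : ℤ => (0 : X d)) := by
      intro m hm1 hm2
      exact absurd hm2 (by omega)
    have hfro : Frozen a (-(n:ℤ)) (fun _ : ℤ => (0 : X d)) := ⟨fun _ _ => rfl, fun _ _ => rfl⟩
    have hPhi0 : Phi V ω a (-(n:ℤ)) (fun _ : ℤ => (0 : X d)) = 0 := by
      unfold Phi
      rw [Finset.Icc_eq_empty (by omega)]
      exact Finset.sum_empty
    have hsingle := Finset.single_le_sum
      (f := fun h : {γ : ℤ → X d // Adm a (-(n:ℤ)) γ ∧ Frozen a (-(n:ℤ)) γ ∧ γ (-(n:ℤ)) = (0 : X d)} =>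
        Real.exp (Phi V ω a (-(n:ℤ)) h.1) * φ (h.1 a))
      (fun γ _ => mul_nonneg (Real.exp_pos _).le (hφ0 _))
      (Finset.mem_univ (⟨fun _ => (0 : X d), hadm, hfro, rfl⟩ :
        {γ : ℤ → X d // Adm a (-(n:ℤ)) γ ∧ Frozen a (-(n:ℤ)) γ ∧ γ (-(n:ℤ)) = (0 : X d)}))
    simp only [hPhi0, Real.exp_zero, one_mul] at hsingle
    exact hsingle
  -- classification map
  set tmap : {γ : ℤ → X d // Adm a 0 γ ∧ Frozen a 0 γ ∧ γ 0 = y} → ℕ := fun γ =>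
    if h : ((Finset.Icc a 0).filter fun m => γ.1 m = 0).Nonempty
    then (-(((Finset.Icc a 0).filter fun m => γ.1 m = 0).max' h)).toNat
    else n + 1 with htmap
  have hy' : r < Finset.univ.sup (fun i => (y i).natAbs) := hy
  obtain ⟨i0, -, hi0⟩ := Finset.lt_sup_iff.1 hy'
  have htprop : ∀ γ : {γ : ℤ → X d // Adm a 0 γ ∧ Frozen a 0 γ ∧ γ 0 = y},
      (r + 1 ≤ tmap γ ∧ tmap γ ≤ n + 1) ∧
      (tmap γ ≤ n → (γ.1 (-(tmap γ : ℤ)) = 0 ∧ ∀ m : ℤ, -(tmap γ : ℤ) < m → m ≤ 0 → γ.1 m ≠ 0)) ∧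
      (tmap γ = n + 1 → ∀ m : ℤ, a ≤ m → m ≤ 0 → γ.1 m ≠ 0) := by
    intro γ
    by_cases h : ((Finset.Icc a 0).filter fun m => γ.1 m = 0).Nonempty
    · have htval : tmap γ = (-(((Finset.Icc a 0).filter fun m => γ.1 m = 0).max' h)).toNat := by
        rw [htmap]
        exact dif_pos h
      set τ : ℤ := ((Finset.Icc a 0).filter fun m => γ.1 m = 0).max' h with hτ
      have hτmem := Finset.max'_mem ((Finset.Icc a 0).filter fun m => γ.1 m = 0) h
      rw [Finset.mem_filter, Finset.mem_Icc] at hτmem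
      obtain ⟨⟨hτa, hτ0⟩, hτz⟩ := hτmem
      have hτmax : ∀ m : ℤ, a ≤ m → m ≤ 0 → γ.1 m = 0 → m ≤ τ := by
        intro m hm1 hm2 hmz
        exact Finset.le_max' _ m (Finset.mem_filter.2 ⟨Finset.mem_Icc.2 ⟨hm1, hm2⟩, hmz⟩)
      have hb2 := dist_bound γ.2.1 hτa i0 ((-τ).toNat) (by omega)
      rw [show τ + (((-τ).toNat : ℕ) : ℤ) = 0 by omega] at hb2
      rw [show γ.1 0 i0 = y i0 from congrFun γ.2.2.2 i0] at hb2
      rw [show γ.1 τ i0 = 0 from congrFun hτz i0] at hb2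
      have hk1 : r + 1 ≤ (-τ).toNat := by omega
      refine ⟨⟨by omega, by omega⟩, fun _ => ?_, fun habs => ?_⟩
      · have hτeq : -((tmap γ : ℕ) : ℤ) = τ := by rw [htval]; omega
        rw [hτeq]
        refine ⟨hτz, fun m hm1 hm2 hmz => ?_⟩
        exact absurd (hτmax m (by omega) hm2 hmz) (by omega)
      · exfalso
        rw [htval] at habs
        omega
    · have htval : tmap γ = n + 1 := by
        rw [htmap]
        exact dif_neg h
      refine ⟨⟨by omega, by omega⟩, fun hle => absurd htval (by omega), fun _ => ?_⟩
      intro m hm1 hm2 hmz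
      exact h ⟨m, Finset.mem_filter.2 ⟨Finset.mem_Icc.2 ⟨hm1, hm2⟩, hmz⟩⟩
  -- decomposition of the sum over paths ending at y
  have hdecomp : (∑ γ : {γ : ℤ → X d // Adm a 0 γ ∧ Frozen a 0 γ ∧ γ 0 = y},
        Real.exp (Phi V ω a 0 γ.1) * φ (γ.1 a))
      = ∑ k ∈ Finset.Icc (r+1) (n+1), ∑ γ ∈ Finset.univ.filter
          (fun γ : {γ : ℤ → X d // Adm a 0 γ ∧ Frozen a 0 γ ∧ γ 0 = y} => tmap γ = k),
          Real.exp (Phi V ω a 0 γ.1) * φ (γ.1 a) :=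
    (Finset.sum_fiberwise_of_maps_to
      (fun γ _ => Finset.mem_Icc.2 ⟨(htprop γ).1.1, (htprop γ).1.2⟩) _).symm
  -- Step B : paths whose last visit to 0 is at time -k
  have stepB : ∀ k ∈ Finset.Icc (r+1) n,
      (∑ γ ∈ Finset.univ.filter
          (fun γ : {γ : ℤ → X d // Adm a 0 γ ∧ Frozen a 0 γ ∧ γ 0 = y} => tmap γ = k),
          Real.exp (Phi V ω a 0 γ.1) * φ (γ.1 a))
      ≤ Real.exp (M₀ - M₁) * x ^ k * W0 := by
    intro k hk
    rw [Finset.mem_Icc] at hk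
    have hab : a ≤ -(k:ℤ) := by omega
    have hbm : -(k:ℤ) ≤ -1 := by omega
    have hmR : ∀ γ : {γ : ℤ → X d // Adm a 0 γ ∧ Frozen a 0 γ ∧ γ 0 = y},
        ∃ h : {γ : ℤ → X d // Adm a (-(k:ℤ)) γ ∧ Frozen a (-(k:ℤ)) γ ∧ γ (-(k:ℤ)) = (0 : X d)},
          (γ.1 (-(k:ℤ)) = 0 → h.1 = cutPath (-(k:ℤ)) γ.1) := by
      intro γ
      by_cases hz : γ.1 (-(k:ℤ)) = 0
      · exact ⟨⟨cutPath (-(k:ℤ)) γ.1, cut_adm γ.2.1 (by omega), cut_frozen γ.2.2.1 hab,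
          by rw [cut_apply_le γ.1 le_rfl]; exact hz⟩, fun _ => rfl⟩
      · refine ⟨⟨fun _ => (0 : X d), fun m _ _ => by simp [stepOK],
          ⟨fun _ _ => rfl, fun _ _ => rfl⟩, rfl⟩, fun hzz => absurd hzz hz⟩
    choose mR hmRspec using hmR
    have hmain := sum_le_of_map
      (f := fun γ : {γ : ℤ → X d // Adm a 0 γ ∧ Frozen a 0 γ ∧ γ 0 = y} =>
        Real.exp (Phi V ω a 0 γ.1) * φ (γ.1 a))
      (g := fun h : {γ : ℤ → X d // Adm a (-(k:ℤ)) γ ∧ Frozen a (-(k:ℤ)) γ ∧ γ (-(k:ℤ)) = (0 : X d)} =>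
        Real.exp (Phi V ω a (-(k:ℤ)) h.1) * φ (h.1 a))
      (m := mR)
      (Finset.univ.filter
        (fun γ : {γ : ℤ → X d // Adm a 0 γ ∧ Frozen a 0 γ ∧ γ 0 = y} => tmap γ = k))
      (Real.exp ((k:ℝ) * M₁)) ((2*(d:ℝ)+1)^k)
      (fun h => mul_nonneg (Real.exp_pos _).le (hφ0 _)) (Real.exp_pos _).le
      ?_ ?_
    · -- combine with step A
      have hA := stepA k (by omega) hk.2
      calc (∑ γ ∈ Finset.univ.filter
            (fun γ : {γ : ℤ → X d // Adm a 0 γ ∧ Frozen a 0 γ ∧ γ 0 = y} => tmap γ = k),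
            Real.exp (Phi V ω a 0 γ.1) * φ (γ.1 a))
          ≤ (2*(d:ℝ)+1)^k * Real.exp ((k:ℝ) * M₁) *
            (∑ h : {γ : ℤ → X d // Adm a (-(k:ℤ)) γ ∧ Frozen a (-(k:ℤ)) γ ∧ γ (-(k:ℤ)) = (0 : X d)},
              Real.exp (Phi V ω a (-(k:ℤ)) h.1) * φ (h.1 a)) := hmain
        _ ≤ (2*(d:ℝ)+1)^k * Real.exp ((k:ℝ) * M₁) *
            (Real.exp (M₀ - M₁ - ∑ m ∈ Finset.Icc (-(k:ℤ) + 1) 0, xi M₀ M₁ ω m) * W0) := by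
            apply mul_le_mul_of_nonneg_left hA
            positivity
        _ ≤ Real.exp (M₀ - M₁) * x ^ k * W0 := by
            have hSk := hxi k (by omega)
            have e1 : (2*(d:ℝ)+1)^k = Real.exp ((k:ℝ) * L) := by
              rw [Real.exp_nat_mul, Real.exp_log h2d]
            have e2 : x ^ k = Real.exp ((k:ℝ) * -lam) := by
              rw [hxdef, Real.exp_nat_mul]
            have hkey : Real.exp ((k:ℝ) * L) * Real.exp ((k:ℝ) * M₁) *
                Real.exp (M₀ - M₁ - ∑ m ∈ Finset.Icc (-(k:ℤ) + 1) 0, xi M₀ M₁ ω m)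
                ≤ Real.exp (M₀ - M₁) * Real.exp ((k:ℝ) * -lam) := by
              rw [← Real.exp_add, ← Real.exp_add, ← Real.exp_add]
              apply Real.exp_le_exp.2
              have hexp : (k:ℝ) * (M₁ + lam + L) = (k:ℝ)*M₁ + (k:ℝ)*lam + (k:ℝ)*L := by ring
              rw [hexp] at hSk
              linarith
            calc (2*(d:ℝ)+1)^k * Real.exp ((k:ℝ) * M₁) *
                (Real.exp (M₀ - M₁ - ∑ m ∈ Finset.Icc (-(k:ℤ) + 1) 0, xi M₀ M₁ ω m) * W0)
                = (Real.exp ((k:ℝ) * L) * Real.exp ((k:ℝ) * M₁) *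
                  Real.exp (M₀ - M₁ - ∑ m ∈ Finset.Icc (-(k:ℤ) + 1) 0, xi M₀ M₁ ω m)) * W0 := by
                  rw [e1]; ring
              _ ≤ (Real.exp (M₀ - M₁) * Real.exp ((k:ℝ) * -lam)) * W0 :=
                  mul_le_mul_of_nonneg_right hkey hW0nn
              _ = Real.exp (M₀ - M₁) * x ^ k * W0 := by rw [e2]
    · -- pointwise bound on the fiber set
      intro γ hγs
      have htk : tmap γ = k := (Finset.mem_filter.1 hγs).2
      have hprop2 := (htprop γ).2.1 (by omega)
      rw [htk] at hprop2
      obtain ⟨hz, hne⟩ := hprop2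
      have hcut := hmRspec γ hz
      have htail : Phi V ω (-(k:ℤ)) 0 γ.1 ≤ (k:ℝ) * M₁ := by
        have h0 := Phi_le_of_ne_zero hM₁ hV1 ω γ.1 hne
        rwa [show ((0 - -(k:ℤ)).toNat : ℕ) = k by omega] at h0
      have hgval : Real.exp (Phi V ω a (-(k:ℤ)) (mR γ).1) * φ ((mR γ).1 a)
          = Real.exp (Phi V ω a (-(k:ℤ)) γ.1) * φ (γ.1 a) := by
        rw [hcut, Phi_cut, cut_apply_le γ.1 hab]
      rw [hgval]
      calc Real.exp (Phi V ω a 0 γ.1) * φ (γ.1 a)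
          = Real.exp (Phi V ω a (-(k:ℤ)) γ.1) * Real.exp (Phi V ω (-(k:ℤ)) 0 γ.1) * φ (γ.1 a) := by
            rw [← Real.exp_add, ← Phi_split V ω hab (by omega) γ.1]
        _ ≤ Real.exp ((k:ℝ) * M₁) * (Real.exp (Phi V ω a (-(k:ℤ)) γ.1) * φ (γ.1 a)) := by
            have h1 : Real.exp (Phi V ω (-(k:ℤ)) 0 γ.1) ≤ Real.exp ((k:ℝ) * M₁) :=
              Real.exp_le_exp.2 htail
            nlinarith [Real.exp_pos (Phi V ω a (-(k:ℤ)) γ.1), hφ0 (γ.1 a),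
              mul_nonneg (Real.exp_pos (Phi V ω a (-(k:ℤ)) γ.1)).le (hφ0 (γ.1 a))]
    · -- fiber cardinality bound
      intro h0
      have hcard : (((Finset.univ.filter
          (fun γ : {γ : ℤ → X d // Adm a 0 γ ∧ Frozen a 0 γ ∧ γ 0 = y} => tmap γ = k)).filter
          (fun γ => mR γ = h0)).card) ≤ (2*d+1)^k := by
        have hinj : Set.InjOn (fun γ : {γ : ℤ → X d // Adm a 0 γ ∧ Frozen a 0 γ ∧ γ 0 = y} =>
            (fun j : Fin k => (⟨inc (-(k:ℤ)) γ.1 j,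
              inc_mem_DF γ.2.1 hab (by have := j.2; omega)⟩ : {δ : X d // δ ∈ DF d})))
            ↑((Finset.univ.filter
              (fun γ : {γ : ℤ → X d // Adm a 0 γ ∧ Frozen a 0 γ ∧ γ 0 = y} => tmap γ = k)).filter
              (fun γ => mR γ = h0)) := by
          intro γ1 hγ1 γ2 hγ2 hEq
          have hm1 := Finset.mem_filter.1 (Finset.mem_coe.1 hγ1)
          have hm2 := Finset.mem_filter.1 (Finset.mem_coe.1 hγ2)
          have ht1 : tmap γ1 = k := (Finset.mem_filter.1 hm1.1).2
          have ht2 : tmap γ2 = k := (Finset.mem_filter.1 hm2.1).2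
          have hp1 := (htprop γ1).2.1 (by omega)
          have hp2 := (htprop γ2).2.1 (by omega)
          rw [ht1] at hp1
          rw [ht2] at hp2
          have hcut1 := hmRspec γ1 hp1.1
          have hcut2 := hmRspec γ2 hp2.1
          apply Subtype.ext
          refine path_ext_upper (show -(k:ℤ) ≤ (0:ℤ) by omega) ?_
            (fun m hm => γ1.2.2.1.2 m hm) (fun m hm => γ2.2.2.1.2 m hm)
            (by rw [γ1.2.2.2, γ2.2.2.2]) ?_
          · intro m hm
            have h12 : cutPath (-(k:ℤ)) γ1.1 = cutPath (-(k:ℤ)) γ2.1 := by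
              rw [← hcut1, ← hcut2, hm1.2, hm2.2]
            have := congrFun h12 m
            rwa [cut_apply_le γ1.1 hm, cut_apply_le γ2.1 hm] at this
          · intro j hj
            have hj' : j < k := by omega
            have := congrFun hEq ⟨j, hj'⟩
            simpa [Subtype.ext_iff] using this
        calc (((Finset.univ.filter
            (fun γ : {γ : ℤ → X d // Adm a 0 γ ∧ Frozen a 0 γ ∧ γ 0 = y} => tmap γ = k)).filter
            (fun γ => mR γ = h0)).card)
            ≤ (Finset.univ : Finset (Fin k → {δ : X d // δ ∈ DF d})).card :=
              Finset.card_le_card_of_injOn _ (fun _ _ => Finset.mem_univ _) hinj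
          _ = (DF d).card ^ k := by
              rw [Finset.card_univ, Fintype.card_fun]
              simp [Fintype.card_coe]
          _ ≤ (2*d+1)^k := Nat.pow_le_pow_left card_DF _
      calc ((((Finset.univ.filter
          (fun γ : {γ : ℤ → X d // Adm a 0 γ ∧ Frozen a 0 γ ∧ γ 0 = y} => tmap γ = k)).filter
          (fun γ => mR γ = h0)).card : ℕ) : ℝ)
          ≤ (((2*d+1)^k : ℕ) : ℝ) := by exact_mod_cast hcard
        _ = (2*(d:ℝ)+1)^k := by push_cast; ring
  -- Step B' : paths never visiting 0
  have hSn := hxi n (by omega)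
  have stepB' : (∑ γ ∈ Finset.univ.filter
        (fun γ : {γ : ℤ → X d // Adm a 0 γ ∧ Frozen a 0 γ ∧ γ 0 = y} => tmap γ = n + 1),
        Real.exp (Phi V ω a 0 γ.1) * φ (γ.1 a))
      ≤ Real.exp (M₀ - M₁) * x ^ (r+1) * W0 := by
    have hterm : ∀ γ ∈ Finset.univ.filter
        (fun γ : {γ : ℤ → X d // Adm a 0 γ ∧ Frozen a 0 γ ∧ γ 0 = y} => tmap γ = n + 1),
        Real.exp (Phi V ω a 0 γ.1) * φ (γ.1 a) ≤ Real.exp ((n:ℝ) * M₁) * (c * φ 0) := by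
      intro γ hγs
      have htk : tmap γ = n + 1 := (Finset.mem_filter.1 hγs).2
      have hne := (htprop γ).2.2 htk
      have hPhi : Phi V ω a 0 γ.1 ≤ (n:ℝ) * M₁ := by
        have h0 := Phi_le_of_ne_zero (b := a) (c := 0) hM₁ hV1 ω γ.1 (fun m hm1 hm2 => hne m (le_of_lt hm1) hm2)
        rwa [show ((0 - a).toNat : ℕ) = n by omega] at h0
      exact mul_le_mul (Real.exp_le_exp.2 hPhi) (hφc _) (hφ0 _) (Real.exp_pos _).le
    have hsum := Finset.sum_le_card_nsmul _ _ _ hterm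
    have hcards : ((Finset.univ.filter
        (fun γ : {γ : ℤ → X d // Adm a 0 γ ∧ Frozen a 0 γ ∧ γ 0 = y} => tmap γ = n + 1)).card)
        ≤ (2*d+1)^n := by
      calc _ ≤ Fintype.card {γ : ℤ → X d // Adm a 0 γ ∧ Frozen a 0 γ ∧ γ 0 = y} := by
            rw [← Finset.card_univ]
            exact Finset.card_le_card (Finset.filter_subset _ _)
        _ ≤ (2*d+1) ^ ((0 - a).toNat) := path_card_le (by omega) y
        _ = (2*d+1)^n := by rw [show ((0:ℤ) - a).toNat = n by omega]
    have hBnn : 0 ≤ Real.exp ((n:ℝ)*M₁) * (c * φ 0) :=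
      mul_nonneg (Real.exp_pos _).le (mul_nonneg (by linarith) (hφ0 _))
    have hnum : (2*(d:ℝ)+1)^n * Real.exp ((n:ℝ)*M₁) *
        (c * (Real.exp (M₀ - M₁ - ∑ m ∈ Finset.Icc (-(n:ℤ) + 1) 0, xi M₀ M₁ ω m) * W0))
        ≤ Real.exp (M₀ - M₁) * x ^ (r+1) * W0 := by
      have e1 : (2*(d:ℝ)+1)^n = Real.exp ((n:ℝ) * L) := by
        rw [Real.exp_nat_mul, Real.exp_log h2d]
      have e2 : c = Real.exp (Real.log c) := (Real.exp_log (by linarith)).symm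
      have e3 : x ^ (r+1) = Real.exp (((r:ℕ):ℝ) * -lam + -lam) := by
        rw [hxdef, Real.exp_add, Real.exp_nat_mul, ← pow_succ]
      have hkey : Real.exp ((n:ℝ) * L) * Real.exp ((n:ℝ)*M₁) *
          (Real.exp (Real.log c) *
            Real.exp (M₀ - M₁ - ∑ m ∈ Finset.Icc (-(n:ℤ) + 1) 0, xi M₀ M₁ ω m))
          ≤ Real.exp (M₀ - M₁) * Real.exp (((r:ℕ):ℝ) * -lam + -lam) := by
        rw [← Real.exp_add, ← Real.exp_add, ← Real.exp_add, ← Real.exp_add]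
        apply Real.exp_le_exp.2
        have hexp : (n:ℝ) * (M₁ + lam + L) = (n:ℝ)*M₁ + (n:ℝ)*lam + (n:ℝ)*L := by ring
        rw [hexp] at hSn
        have hexp2 : ((n:ℝ) - r - 1) * lam = (n:ℝ)*lam - (r:ℝ)*lam - lam := by ring
        rw [hexp2] at hlogc2
        linarith
      calc (2*(d:ℝ)+1)^n * Real.exp ((n:ℝ)*M₁) *
          (c * (Real.exp (M₀ - M₁ - ∑ m ∈ Finset.Icc (-(n:ℤ) + 1) 0, xi M₀ M₁ ω m) * W0))
          = (Real.exp ((n:ℝ) * L) * Real.exp ((n:ℝ)*M₁) *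
            (Real.exp (Real.log c) *
              Real.exp (M₀ - M₁ - ∑ m ∈ Finset.Icc (-(n:ℤ) + 1) 0, xi M₀ M₁ ω m))) * W0 := by
            rw [e1, ← e2]; ring
        _ ≤ (Real.exp (M₀ - M₁) * Real.exp (((r:ℕ):ℝ) * -lam + -lam)) * W0 :=
            mul_le_mul_of_nonneg_right hkey hW0nn
        _ = Real.exp (M₀ - M₁) * x ^ (r+1) * W0 := by rw [e3]
    calc (∑ γ ∈ Finset.univ.filter
          (fun γ : {γ : ℤ → X d // Adm a 0 γ ∧ Frozen a 0 γ ∧ γ 0 = y} => tmap γ = n + 1),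
          Real.exp (Phi V ω a 0 γ.1) * φ (γ.1 a))
        ≤ ((Finset.univ.filter
            (fun γ : {γ : ℤ → X d // Adm a 0 γ ∧ Frozen a 0 γ ∧ γ 0 = y} => tmap γ = n + 1)).card)
            • (Real.exp ((n:ℝ) * M₁) * (c * φ 0)) := hsum
      _ = (((Finset.univ.filter
            (fun γ : {γ : ℤ → X d // Adm a 0 γ ∧ Frozen a 0 γ ∧ γ 0 = y} => tmap γ = n + 1)).card
            : ℕ) : ℝ) * (Real.exp ((n:ℝ) * M₁) * (c * φ 0)) := by rw [nsmul_eq_mul]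
      _ ≤ (2*(d:ℝ)+1)^n * (Real.exp ((n:ℝ) * M₁) * (c * φ 0)) := by
          apply mul_le_mul_of_nonneg_right _ hBnn
          calc (((Finset.univ.filter
              (fun γ : {γ : ℤ → X d // Adm a 0 γ ∧ Frozen a 0 γ ∧ γ 0 = y} => tmap γ = n + 1)).card
              : ℕ) : ℝ) ≤ (((2*d+1)^n : ℕ) : ℝ) := by exact_mod_cast hcards
            _ = (2*(d:ℝ)+1)^n := by push_cast; ring
      _ ≤ (2*(d:ℝ)+1)^n * (Real.exp ((n:ℝ) * M₁) *
          (c * (Real.exp (M₀ - M₁ - ∑ m ∈ Finset.Icc (-(n:ℤ) + 1) 0, xi M₀ M₁ ω m) * W0))) := by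
          apply mul_le_mul_of_nonneg_left _ (by positivity)
          apply mul_le_mul_of_nonneg_left _ (Real.exp_pos _).le
          exact mul_le_mul_of_nonneg_left stepL (by linarith)
      _ = (2*(d:ℝ)+1)^n * Real.exp ((n:ℝ)*M₁) *
          (c * (Real.exp (M₀ - M₁ - ∑ m ∈ Finset.Icc (-(n:ℤ) + 1) 0, xi M₀ M₁ ω m) * W0)) := by
          ring
      _ ≤ Real.exp (M₀ - M₁) * x ^ (r+1) * W0 := hnum
  -- geometric series bound
  have hgeom : (∑ k ∈ Finset.Icc (r+1) n, x ^ k) ≤ x^(r+1) * (1/(1-x)) := by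
    rw [← Finset.Ico_add_one_right_eq_Icc, geom_sum_Ico (ne_of_lt hx1) (by omega)]
    calc (x ^ (n+1) - x ^ (r+1)) / (x - 1) = (x ^ (r+1) - x ^ (n+1)) / (1 - x) := by
          rw [div_eq_div_iff (by linarith) (by linarith)]
          ring
      _ ≤ x ^ (r+1) / (1 - x) := by
          rw [div_eq_mul_inv, div_eq_mul_inv]
          exact mul_le_mul_of_nonneg_right (sub_le_self _ (pow_nonneg hx0.le _))
            (inv_nonneg.2 h1x.le)
      _ = x^(r+1) * (1/(1-x)) := by ring
  have e3 : Real.exp (-lam * ((r:ℝ)+1)) = x ^ (r+1) := by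
    rw [hxdef, ← Real.exp_nat_mul]
    congr 1
    push_cast
    ring
  -- main estimate
  have main : (∑ γ : {γ : ℤ → X d // Adm a 0 γ ∧ Frozen a 0 γ ∧ γ 0 = y},
        Real.exp (Phi V ω a 0 γ.1) * φ (γ.1 a))
      ≤ Kf * Real.exp (-lam * ((r:ℝ)+1)) * W0 := by
    rw [hdecomp, Finset.sum_Icc_succ_top (by omega : r + 1 ≤ n + 1)]
    have hB := Finset.sum_le_sum stepB
    calc (∑ k ∈ Finset.Icc (r+1) n, ∑ γ ∈ Finset.univ.filter
            (fun γ : {γ : ℤ → X d // Adm a 0 γ ∧ Frozen a 0 γ ∧ γ 0 = y} => tmap γ = k),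
            Real.exp (Phi V ω a 0 γ.1) * φ (γ.1 a))
          + (∑ γ ∈ Finset.univ.filter
            (fun γ : {γ : ℤ → X d // Adm a 0 γ ∧ Frozen a 0 γ ∧ γ 0 = y} => tmap γ = n + 1),
            Real.exp (Phi V ω a 0 γ.1) * φ (γ.1 a))
        ≤ (∑ k ∈ Finset.Icc (r+1) n, Real.exp (M₀-M₁) * x^k * W0)
          + Real.exp (M₀-M₁) * x^(r+1) * W0 := add_le_add hB stepB'
      _ = Real.exp (M₀-M₁) * (∑ k ∈ Finset.Icc (r+1) n, x^k) * W0
          + Real.exp (M₀-M₁) * x^(r+1) * W0 := by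
          congr 1
          rw [← Finset.sum_mul, ← Finset.mul_sum]
      _ ≤ Real.exp (M₀-M₁) * (x^(r+1) * (1/(1-x))) * W0
          + Real.exp (M₀-M₁) * x^(r+1) * W0 := by
          have := mul_le_mul_of_nonneg_right
            (mul_le_mul_of_nonneg_left hgeom (Real.exp_pos (M₀-M₁)).le) hW0nn
          linarith
      _ = Kf * x^(r+1) * W0 := by rw [hKf]; ring
      _ = Kf * Real.exp (-lam * ((r:ℝ)+1)) * W0 := by rw [e3]
  -- conclusion
  rw [T_eq V ω a 0 φ y, T_eq V ω a 0 φ 0, ← hW0]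
  have hP : (0:ℝ) < ((2 * (d:ℝ) + 1) ^ ((0:ℤ) - a))⁻¹ := by positivity
  refine le_trans (mul_le_mul_of_nonneg_left main hP.le) ?_
  have hKf2 : Kf ≤ 2 * max 1 Kf := by
    have h1 := le_max_right (1:ℝ) Kf
    have h0 : (0:ℝ) ≤ max 1 Kf := le_trans zero_le_one (le_max_left _ _)
    linarith
  calc ((2 * (d:ℝ) + 1) ^ ((0:ℤ) - a))⁻¹ * (Kf * Real.exp (-lam * ((r:ℝ)+1)) * W0)
      = Kf * Real.exp (-lam * ((r:ℝ)+1)) * (((2 * (d:ℝ) + 1) ^ ((0:ℤ) - a))⁻¹ * W0) := by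
        ring
    _ ≤ 2 * max 1 Kf * Real.exp (-lam * ((r:ℝ)+1)) * (((2 * (d:ℝ) + 1) ^ ((0:ℤ) - a))⁻¹ * W0) :=
        mul_le_mul_of_nonneg_right (mul_le_mul_of_nonneg_right hKf2 (Real.exp_pos _).le)
          (mul_nonneg hP.le hW0nn)

end BKpaper
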